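/- Given an o6c4c solution of a cubic graph, if a second o6c4c solution is obtained from it by reorienting some of the circuits, then the two solutions have the same parity of the number of ordered vertices. -/

import Mathlib

/-- An oriented cycle (oriented even subgraph) of `G`, encoded as a
divergence-free skew-symmetric flow with values in `{-1, 0, 1}` supported
on edges of `G`. -/
def IsOrientedCycle {V : Type*} [Fintype V] (G : SimpleGraph V)
    (f : V → V → ℤ) : Prop :=
  (∀ u v, f u v = - f v u) ∧
  (∀ u v, f u v ≠ 0 → G.Adj u v) ∧
  (∀ u v, f u v = 0 ∨ f u v = 1 ∨ f u v = -1) ∧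
  (∀ v, ∑ w, f v w = 0)

/-- An oriented 6-cycle 4-cover: 6 oriented even subgraphs such that every
edge is covered exactly 4 times, twice in each direction. -/
def IsO6c4c {V : Type*} [Fintype V] (G : SimpleGraph V)
    (f : Fin 6 → V → V → ℤ) : Prop :=
  (∀ i, IsOrientedCycle G (f i)) ∧
  (∀ u v, G.Adj u v →
    Set.ncard {i : Fin 6 | f i u v = 1} = 2 ∧
    Set.ncard {i : Fin 6 | f i u v = -1} = 2)

/-- A vertex `v` is *ordered* in an o6c4c if for every pair of incident
edges, the two cycle-transitions through that pair of edges traverse it in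
the same direction (no pair of edges is traversed in opposite directions). -/
def OrderedVertex {V : Type*} [Fintype V] (f : Fin 6 → V → V → ℤ) (v : V) : Prop :=
  ∀ x y : V,
    ¬ ((∃ i, f i x v = 1 ∧ f i v y = 1) ∧ (∃ j, f j y v = 1 ∧ f j v x = 1))

open Finset
open scoped Classical

section Aux
variable {V : Type*} [Fintype V] {G : SimpleGraph V} {h f g : Fin 6 → V → V → ℤ}

lemma ncard_eq_filter_card {α : Type*} [Fintype α] (p : α → Prop) [DecidablePred p] :
    {x | p x}.ncard = (univ.filter p).card := by
  have : {x | p x} = ↑(univ.filter p) := by ext x; simp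
  rw [this, Set.ncard_coe_finset]

lemma cover_one (hh : IsO6c4c G h) {u v : V} (huv : G.Adj u v) :
    (univ.filter fun i => h i u v = 1).card = 2 := by
  have := (hh.2 u v huv).1
  rwa [ncard_eq_filter_card] at this

lemma cover_negone (hh : IsO6c4c G h) {u v : V} (huv : G.Adj u v) :
    (univ.filter fun i => h i u v = -1).card = 2 := by
  have := (hh.2 u v huv).2
  rwa [ncard_eq_filter_card] at this

lemma local_structure (hh : IsO6c4c G h)
    (hcubic : ∀ w : V, (G.neighborSet w).ncard = 3) (v : V) (i : Fin 6) :
    ∃ a b : V, a ≠ b ∧ h i a v = 1 ∧ h i v b = 1 ∧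
      (∀ u, h i u v = 1 → u = a) ∧ (∀ u, h i v u = 1 → u = b) ∧
      (∀ u, h i u v ≠ 0 → u = a ∨ u = b) := by
  have hskew : ∀ j u w, h j u w = - h j w u := fun j => (hh.1 j).1
  have hadj : ∀ j u w, h j u w ≠ 0 → G.Adj u w := fun j => (hh.1 j).2.1
  have hval : ∀ j u w, h j u w = 0 ∨ h j u w = 1 ∨ h j u w = -1 := fun j => (hh.1 j).2.2.1
  have hdiv : ∀ j w, ∑ u, h j w u = 0 := fun j => (hh.1 j).2.2.2
  set N : Finset V := univ.filter (fun w => G.Adj v w) with hN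
  have hNmem : ∀ w, w ∈ N ↔ G.Adj v w := by intro w; simp [hN]
  have hNcard : N.card = 3 := by
    have := hcubic v
    have h2 : (G.neighborSet v) = {w | G.Adj v w} := rfl
    rw [h2, ncard_eq_filter_card] at this
    exact this
  set In : Fin 6 → Finset V := fun j => univ.filter (fun a => h j a v = 1) with hIn
  set Out : Fin 6 → Finset V := fun j => univ.filter (fun a => h j v a = 1) with hOut
  have hInMem : ∀ j a, a ∈ In j ↔ h j a v = 1 := by intro j a; simp [hIn]
  have hOutMem : ∀ j a, a ∈ Out j ↔ h j v a = 1 := by intro j a; simp [hOut]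
  have hInSub : ∀ j, In j ⊆ N := by
    intro j a ha
    rw [hInMem] at ha
    rw [hNmem]
    exact ((hadj j a v (by rw [ha]; norm_num)).symm)
  have hOutSub : ∀ j, Out j ⊆ N := by
    intro j a ha
    rw [hOutMem] at ha
    rw [hNmem]
    exact (hadj j v a (by rw [ha]; norm_num))
  have hdisj : ∀ j, Disjoint (In j) (Out j) := by
    intro j
    rw [Finset.disjoint_left]
    intro a ha ha'
    rw [hInMem] at ha; rw [hOutMem] at ha'
    have := hskew j a v
    rw [ha, ha'] at this
    norm_num at this
  have hcardeq : ∀ j, (In j).card = (Out j).card := by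
    intro j
    have hcard1 : ((Out j).card : ℤ) = ∑ a, if h j v a = 1 then (1:ℤ) else 0 := by
      rw [hOut, Finset.card_filter]
      push_cast
      rfl
    have hcard2 : ((In j).card : ℤ) = ∑ a, if h j v a = -1 then (1:ℤ) else 0 := by
      rw [hIn, Finset.card_filter]
      push_cast
      apply Finset.sum_congr rfl
      intro a _
      have h1 := hskew j v a
      split_ifs <;> omega
    have e1 : ∀ w, h j v w = (if h j v w = 1 then (1:ℤ) else 0) - (if h j v w = -1 then (1:ℤ) else 0) := by
      intro w
      rcases hval j v w with h0 | h1 | hm <;> split_ifs <;> omega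
    have e2 : (0:ℤ) = ∑ w, h j v w := (hdiv j v).symm
    rw [Finset.sum_congr rfl (fun w _ => e1 w), Finset.sum_sub_distrib, ← hcard1, ← hcard2] at e2
    omega
  have hInle : ∀ j, (In j).card ≤ 1 := by
    intro j
    have hu : (In j ∪ Out j).card ≤ 3 := by
      calc (In j ∪ Out j).card ≤ N.card := Finset.card_le_card (Finset.union_subset (hInSub j) (hOutSub j))
      _ = 3 := hNcard
    rw [Finset.card_union_of_disjoint (hdisj j)] at hu
    have := hcardeq j
    omega
  have hsum6 : ∑ j : Fin 6, (In j).card = 6 := by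
    have e1 : ∀ j : Fin 6, (In j).card = ∑ a ∈ N, (if h j a v = 1 then 1 else 0) := by
      intro j
      rw [hIn, Finset.card_filter]
      refine (Finset.sum_subset (N.subset_univ) ?_).symm
      intro a _ haN
      have : ¬ (h j a v = 1) := by
        intro h1
        exact haN ((hNmem a).mpr ((hadj j a v (by rw [h1]; norm_num)).symm))
      simp [this]
    rw [Finset.sum_congr rfl (fun j _ => e1 j), Finset.sum_comm]
    have e2 : ∀ a ∈ N, ∑ j : Fin 6, (if h j a v = 1 then 1 else 0) = 2 := by
      intro a ha
      rw [← Finset.card_filter]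
      exact cover_one hh ((hNmem a).mp ha).symm
    rw [Finset.sum_congr rfl e2, Finset.sum_const, hNcard]
    norm_num
  have hIn1 : ∀ j, (In j).card = 1 := by
    intro j
    by_contra hne
    have hj0 : (In j).card = 0 := by have := hInle j; omega
    have : ∑ k : Fin 6, (In k).card < ∑ k : Fin 6, 1 := by
      apply Finset.sum_lt_sum
      · intro k _; exact hInle k
      · exact ⟨j, Finset.mem_univ j, by omega⟩
    simp at this
    omega
  have hOut1 : (Out i).card = 1 := by rw [← hcardeq]; exact hIn1 i
  obtain ⟨a, hA⟩ := Finset.card_eq_one.mp (hIn1 i)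
  obtain ⟨b, hB⟩ := Finset.card_eq_one.mp hOut1
  have hav : h i a v = 1 := by rw [← hInMem, hA]; exact Finset.mem_singleton_self a
  have hvb : h i v b = 1 := by rw [← hOutMem, hB]; exact Finset.mem_singleton_self b
  have hune : a ≠ b := by
    intro hab
    have := Finset.disjoint_left.mp (hdisj i) (by rw [hA]; exact Finset.mem_singleton_self a)
    exact this (by rw [hB, hab]; exact Finset.mem_singleton_self b)
  refine ⟨a, b, hune, hav, hvb, ?_, ?_, ?_⟩
  · intro u hu
    have : u ∈ In i := (hInMem i u).mpr hu
    rw [hA] at this; exact Finset.mem_singleton.mp this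
  · intro u hu
    have : u ∈ Out i := (hOutMem i u).mpr hu
    rw [hB] at this; exact Finset.mem_singleton.mp this
  · intro u hu
    rcases hval i u v with h0 | h1 | hm
    · exact absurd h0 hu
    · left
      have : u ∈ In i := (hInMem i u).mpr h1
      rw [hA] at this; exact Finset.mem_singleton.mp this
    · right
      have : h i v u = 1 := by have := hskew i v u; omega
      have : u ∈ Out i := (hOutMem i u).mpr this
      rw [hB] at this; exact Finset.mem_singleton.mp this


variable [LinearOrder V]

lemma local_parity (hh : IsO6c4c G h)
    (hcubic : ∀ w : V, (G.neighborSet w).ncard = 3) (v : V) :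
    (if OrderedVertex h v then (1 : ZMod 2) else 0)
      = 1 + ∑ a : V, ∑ b : V, (if a < b then
          (((univ.filter fun i : Fin 6 => h i a v = 1 ∧ h i v b = 1).card : ZMod 2)) else 0) := by
  have hskew : ∀ j u w, h j u w = - h j w u := fun j => (hh.1 j).1
  have hadj : ∀ j u w, h j u w ≠ 0 → G.Adj u w := fun j => (hh.1 j).2.1
  set m : V → V → ℕ := fun a b => (univ.filter fun i : Fin 6 => h i a v = 1 ∧ h i v b = 1).card
    with hm
  have hmmem : ∀ a b (i : Fin 6), (h i a v = 1 ∧ h i v b = 1) → i ∈ (univ.filter fun i : Fin 6 => h i a v = 1 ∧ h i v b = 1) := by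
    intro a b i hi
    simp only [Finset.mem_filter, Finset.mem_univ, true_and]
    exact hi
  have hm_ne : ∀ a b, m a b ≠ 0 → G.Adj v a ∧ G.Adj v b ∧ a ≠ b := by
    intro a b hab
    obtain ⟨i, hi⟩ := Finset.card_pos.mp (Nat.pos_of_ne_zero hab)
    simp only [Finset.mem_filter, Finset.mem_univ, true_and] at hi
    refine ⟨(hadj i a v (by rw [hi.1]; norm_num)).symm, hadj i v b (by rw [hi.2]; norm_num), ?_⟩
    intro hab'
    subst hab'
    have := hskew i a v
    rw [hi.1, hi.2] at this
    norm_num at this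
  set N : Finset V := univ.filter (fun w => G.Adj v w) with hN
  have hNmem : ∀ w, w ∈ N ↔ G.Adj v w := by intro w; simp [hN]
  have hNcard : N.card = 3 := by
    have := hcubic v
    have h2 : (G.neighborSet v) = {w | G.Adj v w} := rfl
    rw [h2, ncard_eq_filter_card] at this
    exact this
  have hlen : (N.sort (·≤·)).length = 3 := by rw [Finset.length_sort, hNcard]
  obtain ⟨x, y, z, hxyz⟩ := List.length_eq_three.mp hlen
  have hsorted := (Finset.sortedLT_sort N).pairwise
  rw [hxyz] at hsorted
  simp only [List.pairwise_cons, List.mem_cons, List.mem_singleton, List.not_mem_nil,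
    List.pairwise_singleton] at hsorted
  have hxy : x < y := by tauto
  have hyz : y < z := by tauto
  have hxz : x < z := lt_trans hxy hyz
  have hmemN : ∀ a, a ∈ N ↔ (a = x ∨ a = y ∨ a = z) := by
    intro a
    rw [← Finset.mem_sort (α := V) (· ≤ ·), hxyz]
    simp
  have hAx : G.Adj v x := (hNmem x).mp ((hmemN x).mpr (Or.inl rfl))
  have hAy : G.Adj v y := (hNmem y).mp ((hmemN y).mpr (Or.inr (Or.inl rfl)))
  have hAz : G.Adj v z := (hNmem z).mp ((hmemN z).mpr (Or.inr (Or.inr rfl)))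
  have hNall : ∀ u, G.Adj v u → u = x ∨ u = y ∨ u = z := by
    intro u hu; exact (hmemN u).mp ((hNmem u).mpr hu)
  have hstr := local_structure hh hcubic v
  -- row lemma
  have hrow : ∀ a b c : V, b ≠ c → G.Adj v a →
      (∀ u, G.Adj v u → u = a ∨ u = b ∨ u = c) → m a b + m a c = 2 := by
    intro a b c hbc hAa hall
    have hA : (univ.filter fun j : Fin 6 => h j a v = 1).card = 2 := cover_one hh hAa.symm
    have hsplit : (univ.filter fun j : Fin 6 => h j a v = 1)
        = (univ.filter fun j : Fin 6 => h j a v = 1 ∧ h j v b = 1)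
          ∪ (univ.filter fun j : Fin 6 => h j a v = 1 ∧ h j v c = 1) := by
      ext j
      simp only [Finset.mem_filter, Finset.mem_univ, true_and, Finset.mem_union]
      constructor
      · intro hj
        obtain ⟨a₀, b₀, hne₀, ha₀, hb₀, hu1, hu2, _⟩ := hstr j
        have hb₀mem : b₀ = a ∨ b₀ = b ∨ b₀ = c := hall b₀ (hadj j v b₀ (by rw [hb₀]; norm_num))
        have hb₀a : b₀ ≠ a := by
          intro hba
          have := hskew j a v
          rw [hba] at hb₀
          omega
        rcases hb₀mem with h1 | h1 | h1
        · exact absurd h1 hb₀a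
        · left; exact ⟨hj, by rw [← h1]; exact hb₀⟩
        · right; exact ⟨hj, by rw [← h1]; exact hb₀⟩
      · rintro (⟨hj, _⟩ | ⟨hj, _⟩) <;> exact hj
    have hdisj2 : Disjoint (univ.filter fun j : Fin 6 => h j a v = 1 ∧ h j v b = 1)
        (univ.filter fun j : Fin 6 => h j a v = 1 ∧ h j v c = 1) := by
      rw [Finset.disjoint_left]
      intro j hj1 hj2
      simp only [Finset.mem_filter, Finset.mem_univ, true_and] at hj1 hj2
      obtain ⟨a₀, b₀, hne₀, ha₀, hb₀, hu1, hu2, _⟩ := hstr j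
      exact hbc ((hu2 b hj1.2).trans (hu2 c hj2.2).symm)
    rw [hsplit, Finset.card_union_of_disjoint hdisj2] at hA
    exact hA
  -- column lemma
  have hcol : ∀ a b c : V, a ≠ b → G.Adj v c →
      (∀ u, G.Adj v u → u = a ∨ u = b ∨ u = c) → m a c + m b c = 2 := by
    intro a b c hab hAc hall
    have hA : (univ.filter fun j : Fin 6 => h j v c = 1).card = 2 := cover_one hh hAc
    have hsplit : (univ.filter fun j : Fin 6 => h j v c = 1)
        = (univ.filter fun j : Fin 6 => h j a v = 1 ∧ h j v c = 1)
          ∪ (univ.filter fun j : Fin 6 => h j b v = 1 ∧ h j v c = 1) := by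
      ext j
      simp only [Finset.mem_filter, Finset.mem_univ, true_and, Finset.mem_union]
      constructor
      · intro hj
        obtain ⟨a₀, b₀, hne₀, ha₀, hb₀, hu1, hu2, _⟩ := hstr j
        have ha₀mem : a₀ = a ∨ a₀ = b ∨ a₀ = c := hall a₀ ((hadj j a₀ v (by rw [ha₀]; norm_num)).symm)
        have ha₀c : a₀ ≠ c := by
          intro hac
          have := hskew j c v
          rw [hac] at ha₀
          omega
        rcases ha₀mem with h1 | h1 | h1
        · left; exact ⟨by rw [← h1]; exact ha₀, hj⟩
        · right; exact ⟨by rw [← h1]; exact ha₀, hj⟩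
        · exact absurd h1 ha₀c
      · rintro (⟨_, hj⟩ | ⟨_, hj⟩) <;> exact hj
    have hdisj2 : Disjoint (univ.filter fun j : Fin 6 => h j a v = 1 ∧ h j v c = 1)
        (univ.filter fun j : Fin 6 => h j b v = 1 ∧ h j v c = 1) := by
      rw [Finset.disjoint_left]
      intro j hj1 hj2
      simp only [Finset.mem_filter, Finset.mem_univ, true_and] at hj1 hj2
      obtain ⟨a₀, b₀, hne₀, ha₀, hb₀, hu1, hu2, _⟩ := hstr j
      exact hab ((hu1 a hj1.1).trans (hu1 b hj2.1).symm)
    rw [hsplit, Finset.card_union_of_disjoint hdisj2] at hA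
    exact hA
  have e1 : m x y + m x z = 2 := hrow x y z hyz.ne hAx hNall
  have e2 : m y x + m y z = 2 := hrow y x z hxz.ne hAy (fun u hu => (hNall u hu).symm.imp id id |> fun t => by rcases hNall u hu with h1|h1|h1 <;> tauto)
  have e3 : m z x + m z y = 2 := hrow z x y hxy.ne hAz (fun u hu => by rcases hNall u hu with h1|h1|h1 <;> tauto)
  have e4 : m y x + m z x = 2 := hcol y z x hyz.ne hAx (fun u hu => by rcases hNall u hu with h1|h1|h1 <;> tauto)
  have e5 : m x y + m z y = 2 := hcol x z y hxz.ne hAy (fun u hu => by rcases hNall u hu with h1|h1|h1 <;> tauto)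
  have e6 : m x z + m y z = 2 := hcol x y z hxy.ne hAz (fun u hu => by rcases hNall u hu with h1|h1|h1 <;> tauto)
  -- vanishing of m outside the three pairs
  have hvan : ∀ a b : V, (¬ (a = x ∨ a = y ∨ a = z)) ∨ (¬ (b = x ∨ b = y ∨ b = z)) → m a b = 0 := by
    intro a b hab
    by_contra hne
    obtain ⟨h1, h2, _⟩ := hm_ne a b hne
    rcases hab with hab | hab
    · exact hab (hNall a h1)
    · exact hab (hNall b h2)
  -- compute the double sum
  have hSS : (∑ a : V, ∑ b : V, (if a < b then (m a b : ZMod 2) else 0))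
      = ((m x y + m x z + m y z : ℕ) : ZMod 2) := by
    have hstep1 : (∑ a : V, ∑ b : V, (if a < b then (m a b : ZMod 2) else 0))
        = ∑ a ∈ ({x, y, z} : Finset V), ∑ b : V, (if a < b then (m a b : ZMod 2) else 0) := by
      refine (Finset.sum_subset (Finset.subset_univ _) ?_).symm
      intro a _ ha
      simp only [Finset.mem_insert, Finset.mem_singleton] at ha
      apply Finset.sum_eq_zero
      intro b _
      have : m a b = 0 := hvan a b (Or.inl ha)
      simp [this]
    have hx' : x ∉ ({y, z} : Finset V) := by
      simp only [Finset.mem_insert, Finset.mem_singleton]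
      push_neg
      exact ⟨hxy.ne, hxz.ne⟩
    have hy' : y ∉ ({z} : Finset V) := by
      simp only [Finset.mem_singleton]
      exact hyz.ne
    have hSx : (∑ b : V, (if x < b then (m x b : ZMod 2) else 0)) = (m x y : ZMod 2) + (m x z : ZMod 2) := by
      have : (∑ b : V, (if x < b then (m x b : ZMod 2) else 0))
          = ∑ b ∈ ({y, z} : Finset V), (if x < b then (m x b : ZMod 2) else 0) := by
        refine (Finset.sum_subset (Finset.subset_univ _) ?_).symm
        intro b _ hb
        simp only [Finset.mem_insert, Finset.mem_singleton] at hb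
        push_neg at hb
        by_cases hbx : b = x
        · subst hbx; simp
        · have : m x b = 0 := hvan x b (Or.inr (by tauto))
          simp [this]
      rw [this, Finset.sum_insert hy', Finset.sum_singleton, if_pos hxy, if_pos hxz]
    have hSy : (∑ b : V, (if y < b then (m y b : ZMod 2) else 0)) = (m y z : ZMod 2) := by
      have : (∑ b : V, (if y < b then (m y b : ZMod 2) else 0))
          = ∑ b ∈ ({z} : Finset V), (if y < b then (m y b : ZMod 2) else 0) := by
        refine (Finset.sum_subset (Finset.subset_univ _) ?_).symm
        intro b _ hb
        simp only [Finset.mem_singleton] at hb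
        by_cases hbx : b = x
        · subst hbx; simp [not_lt.mpr hxy.le]
        · by_cases hby : b = y
          · subst hby; simp
          · have : m y b = 0 := hvan y b (Or.inr (by tauto))
            simp [this]
      rw [this, Finset.sum_singleton, if_pos hyz]
    have hSz : (∑ b : V, (if z < b then (m z b : ZMod 2) else 0)) = 0 := by
      apply Finset.sum_eq_zero
      intro b _
      by_cases hbx : b = x
      · subst hbx; simp [not_lt.mpr hxz.le]
      · by_cases hby : b = y
        · subst hby; simp [not_lt.mpr hyz.le]
        · by_cases hbz : b = z
          · subst hbz; simp
          · have : m z b = 0 := hvan z b (Or.inr (by tauto))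
            simp [this]
    rw [hstep1, Finset.sum_insert hx', Finset.sum_insert hy', Finset.sum_singleton,
      hSx, hSy, hSz]
    push_cast
    ring
  show (if OrderedVertex h v then (1 : ZMod 2) else 0)
      = 1 + ∑ a : V, ∑ b : V, (if a < b then (m a b : ZMod 2) else 0)
  rw [hSS]
  -- case on s := m x y
  have hs2 : m x y ≤ 2 := by omega
  interval_cases hmxy : m x y
  · -- s = 0 : ordered
    have hO : OrderedVertex h v := by
      intro p q hpq
      obtain ⟨⟨i, hi1, hi2⟩, ⟨j, hj1, hj2⟩⟩ := hpq
      have hmpq : m p q ≠ 0 := Finset.card_ne_zero_of_mem (hmmem p q i ⟨hi1, hi2⟩)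
      have hmqp : m q p ≠ 0 := Finset.card_ne_zero_of_mem (hmmem q p j ⟨hj1, hj2⟩)
      obtain ⟨h1, h2, hne⟩ := hm_ne p q hmpq
      rcases hNall p h1 with rfl | rfl | rfl <;> rcases hNall q h2 with rfl | rfl | rfl <;>
        first
          | exact hne rfl
          | omega
    have h1 : m x z = 2 := by omega
    have h2 : m y z = 0 := by omega
    rw [if_pos hO, h1, h2]
    decide
  · -- s = 1 : disordered
    have hmyx : m y x = 1 := by omega
    obtain ⟨i, hi⟩ := Finset.card_pos.mp (by omega : 0 < m x y)
    obtain ⟨j, hj⟩ := Finset.card_pos.mp (by omega : 0 < m y x)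
    simp only [Finset.mem_filter, Finset.mem_univ, true_and] at hi hj
    have hnO : ¬ OrderedVertex h v := by
      intro hO
      exact hO x y ⟨⟨i, hi.1, hi.2⟩, ⟨j, hj.1, hj.2⟩⟩
    have h1 : m x z = 1 := by omega
    have h2 : m y z = 1 := by omega
    rw [if_neg hnO, h1, h2]
    decide
  · -- s = 2 : ordered
    have hO : OrderedVertex h v := by
      intro p q hpq
      obtain ⟨⟨i, hi1, hi2⟩, ⟨j, hj1, hj2⟩⟩ := hpq
      have hmpq : m p q ≠ 0 := Finset.card_ne_zero_of_mem (hmmem p q i ⟨hi1, hi2⟩)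
      have hmqp : m q p ≠ 0 := Finset.card_ne_zero_of_mem (hmmem q p j ⟨hj1, hj2⟩)
      obtain ⟨h1, h2, hne⟩ := hm_ne p q hmpq
      rcases hNall p h1 with rfl | rfl | rfl <;> rcases hNall q h2 with rfl | rfl | rfl <;>
        first
          | exact hne rfl
          | omega
    have h1 : m x z = 0 := by omega
    have h2 : m y z = 2 := by omega
    rw [if_pos hO, h1, h2]
    decide


lemma gf_ne_zero (hsame : ∀ i u w, g i u w = f i u w ∨ g i u w = - f i u w) :
    ∀ i u w, g i u w ≠ 0 → f i u w ≠ 0 := by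
  intro i u w hgz hfz
  rcases hsame i u w with h1 | h1 <;> rw [hfz] at h1 <;> omega

lemma dichotomy (hf : IsO6c4c G f) (hg : IsO6c4c G g)
    (hcubic : ∀ w : V, (G.neighborSet w).ncard = 3)
    (hsame : ∀ i u w, g i u w = f i u w ∨ g i u w = - f i u w) (v : V) (i : Fin 6) :
    ∃ a₀ b₀ : V, a₀ ≠ b₀ ∧ f i a₀ v = 1 ∧ f i v b₀ = 1 ∧
      (∀ u, f i u v = 1 → u = a₀) ∧ (∀ u, f i v u = 1 → u = b₀) ∧
      (∀ u, f i u v ≠ 0 → u = a₀ ∨ u = b₀) ∧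
      ((g i a₀ v = 1 ∧ g i v b₀ = 1 ∧ (∀ u, g i u v = 1 → u = a₀) ∧ (∀ u, g i v u = 1 → u = b₀) ∧
          ¬(∃ u, f i u v ≠ 0 ∧ g i u v ≠ f i u v))
        ∨ (g i b₀ v = 1 ∧ g i v a₀ = 1 ∧ (∀ u, g i u v = 1 → u = b₀) ∧ (∀ u, g i v u = 1 → u = a₀) ∧
          (∃ u, f i u v ≠ 0 ∧ g i u v ≠ f i u v))) := by
  have hskewf : ∀ u w, f i u w = - f i w u := fun u w => (hf.1 i).1 u w
  have hskewg : ∀ u w, g i u w = - g i w u := fun u w => (hg.1 i).1 u w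
  have hgf0 := gf_ne_zero hsame
  obtain ⟨a₀, b₀, hne, ha, hb, hu1, hu2, hsupp⟩ := local_structure hf hcubic v i
  obtain ⟨a₁, b₁, hne', ha', hb', hu1', hu2', hsupp'⟩ := local_structure hg hcubic v i
  have ha₁mem : a₁ = a₀ ∨ a₁ = b₀ := hsupp a₁ (hgf0 i a₁ v (by rw [ha']; norm_num))
  have hb₁g : g i b₁ v = -1 := by have := hskewg b₁ v; omega
  have hb₁mem : b₁ = a₀ ∨ b₁ = b₀ := hsupp b₁ (hgf0 i b₁ v (by rw [hb₁g]; norm_num))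
  have hfb₀ : f i b₀ v = -1 := by have := hskewf b₀ v; omega
  refine ⟨a₀, b₀, hne, ha, hb, hu1, hu2, hsupp, ?_⟩
  rcases ha₁mem with h1 | h1
  · -- a₁ = a₀, no reversal
    have hb₁b₀ : b₁ = b₀ := by
      rcases hb₁mem with h2 | h2
      · exact absurd (h1.trans h2.symm) hne'
      · exact h2
    have hga₀ : g i a₀ v = 1 := by rw [← h1]; exact ha'
    have hgvb₀ : g i v b₀ = 1 := by rw [← hb₁b₀]; exact hb'
    have hgb₀ : g i b₀ v = -1 := by rw [← hb₁b₀]; exact hb₁g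
    left
    refine ⟨hga₀, hgvb₀, fun u hu => by rw [← h1]; exact hu1' u hu,
      fun u hu => by rw [← hb₁b₀]; exact hu2' u hu, ?_⟩
    rintro ⟨u, hu0, hune⟩
    rcases hsupp u hu0 with rfl | rfl
    · apply hune; omega
    · apply hune; omega
  · -- a₁ = b₀, reversal
    have hb₁a₀ : b₁ = a₀ := by
      rcases hb₁mem with h2 | h2
      · exact h2
      · exact absurd (h1.trans h2.symm) hne'
    have hgb₀ : g i b₀ v = 1 := by rw [← h1]; exact ha'
    have hgva₀ : g i v a₀ = 1 := by rw [← hb₁a₀]; exact hb'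
    have hga₀ : g i a₀ v = -1 := by have := hskewg a₀ v; omega
    right
    refine ⟨hgb₀, hgva₀, fun u hu => by rw [← h1]; exact hu1' u hu,
      fun u hu => by rw [← hb₁a₀]; exact hu2' u hu, ⟨a₀, by rw [ha]; norm_num, by omega⟩⟩

lemma sum_ind [LinearOrder V] (c d : V) (x : ZMod 2) :
    (∑ a : V, ∑ b : V, if a < b then (if a = c ∧ b = d then x else 0) else 0)
      = if c < d then x else 0 := by
  have h1 : ∀ a : V, (∑ b : V, if a < b then (if a = c ∧ b = d then x else 0) else 0)
      = if a = c then (if c < d then x else 0) else 0 := by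
    intro a
    by_cases hac : a = c
    · subst hac
      rw [if_pos rfl]
      rw [Finset.sum_eq_single d]
      · by_cases h : a < d
        · rw [if_pos h, if_pos h, if_pos ⟨rfl, rfl⟩]
        · rw [if_neg h, if_neg h]
      · intro b _ hbd
        by_cases h : a < b
        · rw [if_pos h, if_neg (by tauto)]
        · rw [if_neg h]
      · intro hd; exact absurd (Finset.mem_univ d) hd
    · rw [if_neg hac]
      apply Finset.sum_eq_zero
      intro b _
      by_cases h : a < b
      · rw [if_pos h, if_neg (by tauto)]
      · rw [if_neg h]
  rw [Finset.sum_congr rfl (fun a _ => h1 a)]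
  rw [Finset.sum_ite_eq' Finset.univ c (fun _ => if c < d then x else 0)]
  rw [if_pos (Finset.mem_univ c)]

lemma count_rev_at (hf : IsO6c4c G f) (hg : IsO6c4c G g)
    (hcubic : ∀ w : V, (G.neighborSet w).ncard = 3)
    (hsame : ∀ i u w, g i u w = f i u w ∨ g i u w = - f i u w) (i : Fin 6) (w : V) :
    (∑ u : V, if (f i u w ≠ 0 ∧ g i u w ≠ f i u w) then 1 else 0 : ℕ)
      = if (∃ u, f i u w ≠ 0 ∧ g i u w ≠ f i u w) then 2 else 0 := by
  obtain ⟨a₀, b₀, hne, ha, hb, hu1, hu2, hsupp, hcase⟩ := dichotomy hf hg hcubic hsame w i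
  have hskewf : ∀ u v, f i u v = - f i v u := fun u v => (hf.1 i).1 u v
  have hskewg : ∀ u v, g i u v = - g i v u := fun u v => (hg.1 i).1 u v
  have hfb₀ : f i b₀ w = -1 := by have := hskewf b₀ w; omega
  rcases hcase with ⟨hga, hgb, _, _, hnex⟩ | ⟨hga, hgb, _, _, hex⟩
  · rw [if_neg hnex]
    apply Finset.sum_eq_zero
    intro u _
    rw [if_neg]
    intro hc
    exact hnex ⟨u, hc⟩
  · rw [if_pos hex]
    have hgb₀ : g i b₀ w = 1 := hga
    have hga₀ : g i a₀ w = -1 := by have := hskewg a₀ w; omega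
    have hiff : ∀ u, (f i u w ≠ 0 ∧ g i u w ≠ f i u w) ↔ (u = a₀ ∨ u = b₀) := by
      intro u
      constructor
      · intro hc; exact hsupp u hc.1
      · rintro (rfl | rfl)
        · exact ⟨by rw [ha]; norm_num, by rw [ha, hga₀]; norm_num⟩
        · exact ⟨by rw [hfb₀]; norm_num, by rw [hfb₀, hgb₀]; norm_num⟩
    have hpt : ∀ u : V, (if (f i u w ≠ 0 ∧ g i u w ≠ f i u w) then 1 else 0 : ℕ)
        = (if u = a₀ then 1 else 0) + (if u = b₀ then 1 else 0) := by
      intro u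
      by_cases h1 : u = a₀
      · subst h1
        rw [if_pos ((hiff u).mpr (Or.inl rfl)), if_pos rfl, if_neg hne]
      · by_cases h2 : u = b₀
        · subst h2
          rw [if_pos ((hiff u).mpr (Or.inr rfl)), if_neg h1, if_pos rfl]
        · rw [if_neg (fun hc => by rcases (hiff u).mp hc with h | h; exact h1 h; exact h2 h),
            if_neg h1, if_neg h2]
    rw [Finset.sum_congr rfl (fun u _ => hpt u), Finset.sum_add_distrib]
    rw [Finset.sum_ite_eq' Finset.univ a₀ (fun _ => 1), Finset.sum_ite_eq' Finset.univ b₀ (fun _ => 1)]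
    simp

lemma rev_symm (hf : IsO6c4c G f) (hg : IsO6c4c G g)
    (hsame : ∀ i u w, g i u w = f i u w ∨ g i u w = - f i u w) (i : Fin 6) :
    ∀ u w, (f i u w ≠ 0 ∧ g i u w ≠ f i u w) ↔ (f i w u ≠ 0 ∧ g i w u ≠ f i w u) := by
  have hskewf : ∀ u v, f i u v = - f i v u := fun u v => (hf.1 i).1 u v
  have hskewg : ∀ u v, g i u v = - g i v u := fun u v => (hg.1 i).1 u v
  intro u w
  constructor <;> intro ⟨h1, h2⟩
  · have e1 := hskewf u w; have e2 := hskewg u w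
    exact ⟨by omega, by omega⟩
  · have e1 := hskewf w u; have e2 := hskewg w u
    exact ⟨by omega, by omega⟩

lemma G2 [LinearOrder V] (hf : IsO6c4c G f) (hg : IsO6c4c G g)
    (hcubic : ∀ w : V, (G.neighborSet w).ncard = 3)
    (hsame : ∀ i u w, g i u w = f i u w ∨ g i u w = - f i u w) (i : Fin 6) :
    (∑ w : V, if (∃ u, f i u w ≠ 0 ∧ g i u w ≠ f i u w) then 1 else 0 : ℕ)
      = ∑ w : V, ∑ u : V, (if (u < w ∧ (f i u w ≠ 0 ∧ g i u w ≠ f i u w)) then 1 else 0) := by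
  have hadjf : ∀ u w, f i u w ≠ 0 → G.Adj u w := fun u w => (hf.1 i).2.1 u w
  have hirr : ∀ u, ¬ (f i u u ≠ 0 ∧ g i u u ≠ f i u u) := by
    rintro u ⟨h1, _⟩
    exact G.irrefl (hadjf u u h1)
  apply Nat.eq_of_mul_eq_mul_left (show 0 < 2 by norm_num)
  have lhs2 : 2 * (∑ w : V, if (∃ u, f i u w ≠ 0 ∧ g i u w ≠ f i u w) then 1 else 0 : ℕ)
      = ∑ w : V, ∑ u : V, (if (f i u w ≠ 0 ∧ g i u w ≠ f i u w) then 1 else 0) := by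
    rw [Finset.mul_sum]
    apply Finset.sum_congr rfl
    intro w _
    rw [count_rev_at hf hg hcubic hsame i w]
    by_cases hex : ∃ u, f i u w ≠ 0 ∧ g i u w ≠ f i u w
    · rw [if_pos hex, if_pos hex]
      norm_num
    · rw [if_neg hex, if_neg hex]
      norm_num
  rw [lhs2]
  have splitpt : ∀ w u : V, (if (f i u w ≠ 0 ∧ g i u w ≠ f i u w) then 1 else 0 : ℕ)
      = (if (u < w ∧ (f i u w ≠ 0 ∧ g i u w ≠ f i u w)) then 1 else 0)
        + (if (w < u ∧ (f i u w ≠ 0 ∧ g i u w ≠ f i u w)) then 1 else 0) := by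
    intro w u
    by_cases hr : (f i u w ≠ 0 ∧ g i u w ≠ f i u w)
    · have huw : u ≠ w := by
        intro he; subst he; exact hirr u hr
      rcases lt_or_gt_of_ne huw with hlt | hgt
      · rw [if_pos hr, if_pos ⟨hlt, hr⟩, if_neg (fun hc => absurd hc.1 (not_lt.mpr hlt.le))]
      · rw [if_pos hr, if_neg (fun hc => absurd hc.1 (not_lt.mpr hgt.le)), if_pos ⟨hgt, hr⟩]
    · rw [if_neg hr, if_neg (fun hc => hr hc.2), if_neg (fun hc => hr hc.2)]
  have hsplit : (∑ w : V, ∑ u : V, (if (f i u w ≠ 0 ∧ g i u w ≠ f i u w) then 1 else 0 : ℕ))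
      = (∑ w : V, ∑ u : V, (if (u < w ∧ (f i u w ≠ 0 ∧ g i u w ≠ f i u w)) then 1 else 0))
        + (∑ w : V, ∑ u : V, (if (w < u ∧ (f i u w ≠ 0 ∧ g i u w ≠ f i u w)) then 1 else 0)) := by
    rw [← Finset.sum_add_distrib]
    apply Finset.sum_congr rfl
    intro w _
    rw [← Finset.sum_add_distrib]
    exact Finset.sum_congr rfl (fun u _ => splitpt w u)
  have hmirror : (∑ w : V, ∑ u : V, (if (w < u ∧ (f i u w ≠ 0 ∧ g i u w ≠ f i u w)) then 1 else 0 : ℕ))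
      = ∑ w : V, ∑ u : V, (if (u < w ∧ (f i u w ≠ 0 ∧ g i u w ≠ f i u w)) then 1 else 0) := by
    have e1 : ∀ w u : V, (if (w < u ∧ (f i u w ≠ 0 ∧ g i u w ≠ f i u w)) then 1 else 0 : ℕ)
        = (if (w < u ∧ (f i w u ≠ 0 ∧ g i w u ≠ f i w u)) then 1 else 0) := by
      intro w u
      by_cases hc : w < u ∧ (f i u w ≠ 0 ∧ g i u w ≠ f i u w)
      · rw [if_pos hc, if_pos ⟨hc.1, (rev_symm hf hg hsame i u w).mp hc.2⟩]
      · rw [if_neg hc, if_neg (fun hc2 => hc ⟨hc2.1, (rev_symm hf hg hsame i w u).mp hc2.2⟩)]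
    rw [Finset.sum_congr rfl (fun w _ => Finset.sum_congr rfl (fun u _ => e1 w u))]
    exact Finset.sum_comm
  rw [hsplit, hmirror, two_mul]

lemma G3 [LinearOrder V] (hf : IsO6c4c G f) (hg : IsO6c4c G g)
    (hsame : ∀ i u w, g i u w = f i u w ∨ g i u w = - f i u w) (w u : V) :
    (∑ i : Fin 6, if (u < w ∧ (f i u w ≠ 0 ∧ g i u w ≠ f i u w)) then (1 : ZMod 2) else 0) = 0 := by
  by_cases hlt : u < w
  · by_cases hadj : G.Adj u w
    · have hval : ∀ i : Fin 6, f i u w = 0 ∨ f i u w = 1 ∨ f i u w = -1 := fun i => (hf.1 i).2.2.1 u w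
      have hiff : ∀ i : Fin 6, (u < w ∧ (f i u w ≠ 0 ∧ g i u w ≠ f i u w))
          ↔ ((f i u w = 1 ∧ g i u w = -1) ∨ (f i u w = -1 ∧ g i u w = 1)) := by
        intro i
        constructor
        · rintro ⟨_, h1, h2⟩
          rcases hsame i u w with h3 | h3
          · exact absurd h3 h2
          · rcases hval i with h4 | h4 | h4
            · exact absurd h4 h1
            · left; exact ⟨h4, by rw [h3, h4]⟩
            · right; exact ⟨h4, by rw [h3, h4]; norm_num⟩
        · rintro (⟨h1, h2⟩ | ⟨h1, h2⟩) <;> exact ⟨hlt, by rw [h1]; norm_num, by rw [h1, h2]; norm_num⟩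
      have hcast : (∑ i : Fin 6, if (u < w ∧ (f i u w ≠ 0 ∧ g i u w ≠ f i u w)) then (1 : ZMod 2) else 0)
          = (((Finset.univ.filter fun i : Fin 6 => (f i u w = 1 ∧ g i u w = -1)).card
              + (Finset.univ.filter fun i : Fin 6 => (f i u w = -1 ∧ g i u w = 1)).card : ℕ) : ZMod 2) := by
        push_cast
        rw [← Finset.sum_boole, ← Finset.sum_boole, ← Finset.sum_add_distrib]
        apply Finset.sum_congr rfl
        intro i _
        by_cases hc : (u < w ∧ (f i u w ≠ 0 ∧ g i u w ≠ f i u w))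
        · rcases (hiff i).mp hc with h1 | h1
          · rw [if_pos hc, if_pos h1, if_neg (by rintro ⟨h2, _⟩; rw [h1.1] at h2; norm_num at h2)]
            norm_num
          · rw [if_pos hc, if_neg (by rintro ⟨h2, _⟩; rw [h1.1] at h2; norm_num at h2), if_pos h1]
            norm_num
        · rw [if_neg hc, if_neg (fun h1 => hc ((hiff i).mpr (Or.inl h1))),
            if_neg (fun h1 => hc ((hiff i).mpr (Or.inr h1)))]
          norm_num
      rw [hcast]
      -- now show the two cards are equal, so the sum is even
      have hgf0 := gf_ne_zero hsame
      have hfg0 : ∀ i : Fin 6, f i u w ≠ 0 → g i u w ≠ 0 := by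
        intro i h1 h2
        rcases hsame i u w with h3 | h3 <;> rw [h2] at h3 <;> omega
      have hvalg : ∀ i : Fin 6, g i u w = 0 ∨ g i u w = 1 ∨ g i u w = -1 := fun i => (hg.1 i).2.2.1 u w
      have hsplitg : (Finset.univ.filter fun i : Fin 6 => g i u w = -1)
          = (Finset.univ.filter fun i : Fin 6 => (f i u w = 1 ∧ g i u w = -1))
            ∪ (Finset.univ.filter fun i : Fin 6 => (f i u w = -1 ∧ g i u w = -1)) := by
        ext i
        simp only [Finset.mem_filter, Finset.mem_univ, true_and, Finset.mem_union]
        constructor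
        · intro h1
          have h2 : f i u w ≠ 0 := hgf0 i u w (by rw [h1]; norm_num)
          rcases hval i with h3 | h3 | h3
          · exact absurd h3 h2
          · left; exact ⟨h3, h1⟩
          · right; exact ⟨h3, h1⟩
        · rintro (⟨_, h1⟩ | ⟨_, h1⟩) <;> exact h1
      have hsplitf : (Finset.univ.filter fun i : Fin 6 => f i u w = -1)
          = (Finset.univ.filter fun i : Fin 6 => (f i u w = -1 ∧ g i u w = 1))
            ∪ (Finset.univ.filter fun i : Fin 6 => (f i u w = -1 ∧ g i u w = -1)) := by
        ext i
        simp only [Finset.mem_filter, Finset.mem_univ, true_and, Finset.mem_union]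
        constructor
        · intro h1
          have h2 : g i u w ≠ 0 := hfg0 i (by rw [h1]; norm_num)
          rcases hvalg i with h3 | h3 | h3
          · exact absurd h3 h2
          · left; exact ⟨h1, h3⟩
          · right; exact ⟨h1, h3⟩
        · rintro (⟨h1, _⟩ | ⟨h1, _⟩) <;> exact h1
      have hd1 : Disjoint (Finset.univ.filter fun i : Fin 6 => (f i u w = 1 ∧ g i u w = -1))
          (Finset.univ.filter fun i : Fin 6 => (f i u w = -1 ∧ g i u w = -1)) := by
        rw [Finset.disjoint_left]
        intro i h1 h2
        simp only [Finset.mem_filter, Finset.mem_univ, true_and] at h1 h2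
        omega
      have hd2 : Disjoint (Finset.univ.filter fun i : Fin 6 => (f i u w = -1 ∧ g i u w = 1))
          (Finset.univ.filter fun i : Fin 6 => (f i u w = -1 ∧ g i u w = -1)) := by
        rw [Finset.disjoint_left]
        intro i h1 h2
        simp only [Finset.mem_filter, Finset.mem_univ, true_and] at h1 h2
        omega
      have hc1 : (Finset.univ.filter fun i : Fin 6 => g i u w = -1).card = 2 := cover_negone hg hadj
      have hc2 : (Finset.univ.filter fun i : Fin 6 => f i u w = -1).card = 2 := cover_negone hf hadj
      rw [hsplitg, Finset.card_union_of_disjoint hd1] at hc1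
      rw [hsplitf, Finset.card_union_of_disjoint hd2] at hc2
      have heq : (Finset.univ.filter fun i : Fin 6 => (f i u w = 1 ∧ g i u w = -1)).card
          = (Finset.univ.filter fun i : Fin 6 => (f i u w = -1 ∧ g i u w = 1)).card := by omega
      rw [heq, ← two_mul, Nat.cast_mul]
      have h20 : ((2:ℕ) : ZMod 2) = 0 := by decide
      rw [h20, zero_mul]
    · apply Finset.sum_eq_zero
      intro i _
      rw [if_neg]
      rintro ⟨_, h1, _⟩
      exact hadj ((hf.1 i).2.1 u w h1)
  · apply Finset.sum_eq_zero
    intro i _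
    rw [if_neg (fun hc => hlt hc.1)]


lemma ite_add_ite_zero (c : Prop) [Decidable c] (X Y : ZMod 2) :
    ((if c then X else 0) + (if c then Y else 0)) = if c then X + Y else 0 := by
  by_cases h : c <;> simp [h]

lemma C1 (hf : IsO6c4c G f) (hg : IsO6c4c G g)
    (hcubic : ∀ w : V, (G.neighborSet w).ncard = 3)
    (hsame : ∀ i u w, g i u w = f i u w ∨ g i u w = - f i u w) (i : Fin 6) (v : V) :
    (∑ a : V, ∑ b : V, if a < b then
        ((if f i a v = 1 ∧ f i v b = 1 then (1:ZMod 2) else 0)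
          + (if g i a v = 1 ∧ g i v b = 1 then (1:ZMod 2) else 0)) else 0)
      = if (∃ u, f i u v ≠ 0 ∧ g i u v ≠ f i u v) then 1 else 0 := by
  obtain ⟨a₀, b₀, hne, ha, hb, hu1, hu2, hsupp, hcase⟩ := dichotomy hf hg hcubic hsame v i
  have hcf : ∀ a b : V, (if f i a v = 1 ∧ f i v b = 1 then (1:ZMod 2) else 0)
      = (if a = a₀ ∧ b = b₀ then 1 else 0) := by
    intro a b
    by_cases hc : f i a v = 1 ∧ f i v b = 1
    · rw [if_pos hc, if_pos ⟨hu1 a hc.1, hu2 b hc.2⟩]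
    · rw [if_neg hc, if_neg (fun hc2 => hc ⟨by rw [hc2.1]; exact ha, by rw [hc2.2]; exact hb⟩)]
  have hsplit : (∑ a : V, ∑ b : V, if a < b then
        ((if f i a v = 1 ∧ f i v b = 1 then (1:ZMod 2) else 0)
          + (if g i a v = 1 ∧ g i v b = 1 then (1:ZMod 2) else 0)) else 0)
      = (∑ a : V, ∑ b : V, if a < b then (if f i a v = 1 ∧ f i v b = 1 then (1:ZMod 2) else 0) else 0)
        + (∑ a : V, ∑ b : V, if a < b then (if g i a v = 1 ∧ g i v b = 1 then (1:ZMod 2) else 0) else 0) := by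
    rw [← Finset.sum_add_distrib]
    apply Finset.sum_congr rfl
    intro a _
    rw [← Finset.sum_add_distrib]
    apply Finset.sum_congr rfl
    intro b _
    rw [ite_add_ite_zero]
  rw [hsplit]
  have hSf : (∑ a : V, ∑ b : V, if a < b then (if f i a v = 1 ∧ f i v b = 1 then (1:ZMod 2) else 0) else 0)
      = if a₀ < b₀ then 1 else 0 := by
    rw [Finset.sum_congr rfl (fun a _ => Finset.sum_congr rfl (fun b _ => by rw [hcf a b]))]
    exact sum_ind a₀ b₀ 1
  rw [hSf]
  rcases hcase with ⟨hga, hgb, hgu1, hgu2, hnex⟩ | ⟨hga, hgb, hgu1, hgu2, hex⟩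
  · have hcg : ∀ a b : V, (if g i a v = 1 ∧ g i v b = 1 then (1:ZMod 2) else 0)
        = (if a = a₀ ∧ b = b₀ then 1 else 0) := by
      intro a b
      by_cases hc : g i a v = 1 ∧ g i v b = 1
      · rw [if_pos hc, if_pos ⟨hgu1 a hc.1, hgu2 b hc.2⟩]
      · rw [if_neg hc, if_neg (fun hc2 => hc ⟨by rw [hc2.1]; exact hga, by rw [hc2.2]; exact hgb⟩)]
    have hSg : (∑ a : V, ∑ b : V, if a < b then (if g i a v = 1 ∧ g i v b = 1 then (1:ZMod 2) else 0) else 0)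
        = if a₀ < b₀ then 1 else 0 := by
      rw [Finset.sum_congr rfl (fun a _ => Finset.sum_congr rfl (fun b _ => by rw [hcg a b]))]
      exact sum_ind a₀ b₀ 1
    rw [hSg, if_neg hnex, ite_add_ite_zero]
    by_cases hlt : a₀ < b₀
    · rw [if_pos hlt]; decide
    · rw [if_neg hlt]
  · have hcg : ∀ a b : V, (if g i a v = 1 ∧ g i v b = 1 then (1:ZMod 2) else 0)
        = (if a = b₀ ∧ b = a₀ then 1 else 0) := by
      intro a b
      by_cases hc : g i a v = 1 ∧ g i v b = 1
      · rw [if_pos hc, if_pos ⟨hgu1 a hc.1, hgu2 b hc.2⟩]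
      · rw [if_neg hc, if_neg (fun hc2 => hc ⟨by rw [hc2.1]; exact hga, by rw [hc2.2]; exact hgb⟩)]
    have hSg : (∑ a : V, ∑ b : V, if a < b then (if g i a v = 1 ∧ g i v b = 1 then (1:ZMod 2) else 0) else 0)
        = if b₀ < a₀ then 1 else 0 := by
      rw [Finset.sum_congr rfl (fun a _ => Finset.sum_congr rfl (fun b _ => by rw [hcg a b]))]
      exact sum_ind b₀ a₀ 1
    rw [hSg, if_pos hex]
    rcases lt_or_gt_of_ne hne with hlt | hgt
    · rw [if_pos hlt, if_neg (not_lt.mpr hlt.le), add_zero]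
    · rw [if_neg (not_lt.mpr hgt.le), if_pos hgt, zero_add]

lemma global_parity (hf : IsO6c4c G f) (hg : IsO6c4c G g)
    (hcubic : ∀ w : V, (G.neighborSet w).ncard = 3)
    (hsame : ∀ i u w, g i u w = f i u w ∨ g i u w = - f i u w) :
    (∑ v : V, ∑ a : V, ∑ b : V, (if a < b then
        (((univ.filter fun i : Fin 6 => f i a v = 1 ∧ f i v b = 1).card : ZMod 2)) else 0))
      = ∑ v : V, ∑ a : V, ∑ b : V, (if a < b then
        (((univ.filter fun i : Fin 6 => g i a v = 1 ∧ g i v b = 1).card : ZMod 2)) else 0) := by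
  have hchar : ∀ p q : ZMod 2, p + q = 0 → p = q := by decide
  apply hchar
  have hcardsum : ∀ (h' : Fin 6 → V → V → ℤ) (v a b : V),
      ((univ.filter fun i : Fin 6 => h' i a v = 1 ∧ h' i v b = 1).card : ZMod 2)
        = ∑ i : Fin 6, (if h' i a v = 1 ∧ h' i v b = 1 then (1:ZMod 2) else 0) := by
    intro h' v a b
    rw [Finset.sum_boole]
  have hpull : ∀ (c : Prop) [Decidable c] (t : Fin 6 → ZMod 2),
      (if c then (∑ i, t i) else 0) = ∑ i, (if c then t i else 0) := by
    intro c hc t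
    by_cases hyp : c
    · simp [hyp]
    · simp [hyp]
  have e1 : ∀ (h' : Fin 6 → V → V → ℤ) (v : V),
      (∑ a : V, ∑ b : V, (if a < b then
          ((univ.filter fun i : Fin 6 => h' i a v = 1 ∧ h' i v b = 1).card : ZMod 2) else 0))
        = ∑ i : Fin 6, ∑ a : V, ∑ b : V,
            (if a < b then (if h' i a v = 1 ∧ h' i v b = 1 then (1:ZMod 2) else 0) else 0) := by
    intro h' v
    calc (∑ a : V, ∑ b : V, (if a < b then
            ((univ.filter fun i : Fin 6 => h' i a v = 1 ∧ h' i v b = 1).card : ZMod 2) else 0))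
        = ∑ a : V, ∑ b : V, ∑ i : Fin 6,
            (if a < b then (if h' i a v = 1 ∧ h' i v b = 1 then (1:ZMod 2) else 0) else 0) := by
          apply Finset.sum_congr rfl
          intro a _
          apply Finset.sum_congr rfl
          intro b _
          rw [hcardsum h' v a b, hpull]
      _ = ∑ a : V, ∑ i : Fin 6, ∑ b : V,
            (if a < b then (if h' i a v = 1 ∧ h' i v b = 1 then (1:ZMod 2) else 0) else 0) :=
          Finset.sum_congr rfl (fun a _ => Finset.sum_comm)
      _ = ∑ i : Fin 6, ∑ a : V, ∑ b : V,
            (if a < b then (if h' i a v = 1 ∧ h' i v b = 1 then (1:ZMod 2) else 0) else 0) :=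
          Finset.sum_comm
  have step1 : ∀ v : V,
      ((∑ a : V, ∑ b : V, (if a < b then
          ((univ.filter fun i : Fin 6 => f i a v = 1 ∧ f i v b = 1).card : ZMod 2) else 0))
        + (∑ a : V, ∑ b : V, (if a < b then
          ((univ.filter fun i : Fin 6 => g i a v = 1 ∧ g i v b = 1).card : ZMod 2) else 0)))
      = ∑ i : Fin 6, (if (∃ u, f i u v ≠ 0 ∧ g i u v ≠ f i u v) then (1:ZMod 2) else 0) := by
    intro v
    rw [e1 f v, e1 g v, ← Finset.sum_add_distrib]
    apply Finset.sum_congr rfl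
    intro i _
    rw [← C1 hf hg hcubic hsame i v]
    rw [← Finset.sum_add_distrib]
    apply Finset.sum_congr rfl
    intro a _
    rw [← Finset.sum_add_distrib]
    apply Finset.sum_congr rfl
    intro b _
    rw [ite_add_ite_zero]
  rw [← Finset.sum_add_distrib, Finset.sum_congr rfl (fun v _ => step1 v), Finset.sum_comm]
  have step2 : ∀ i : Fin 6,
      (∑ v : V, if (∃ u, f i u v ≠ 0 ∧ g i u v ≠ f i u v) then (1:ZMod 2) else 0)
        = ∑ w : V, ∑ u : V, (if (u < w ∧ (f i u w ≠ 0 ∧ g i u w ≠ f i u w)) then (1:ZMod 2) else 0) := by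
    intro i
    have hn := G2 hf hg hcubic hsame i
    calc (∑ v : V, if (∃ u, f i u v ≠ 0 ∧ g i u v ≠ f i u v) then (1:ZMod 2) else 0)
        = ((∑ v : V, if (∃ u, f i u v ≠ 0 ∧ g i u v ≠ f i u v) then 1 else 0 : ℕ) : ZMod 2) := by
          push_cast
          rfl
      _ = ((∑ w : V, ∑ u : V, (if (u < w ∧ (f i u w ≠ 0 ∧ g i u w ≠ f i u w)) then 1 else 0) : ℕ) : ZMod 2) := by
          rw [hn]
      _ = ∑ w : V, ∑ u : V, (if (u < w ∧ (f i u w ≠ 0 ∧ g i u w ≠ f i u w)) then (1:ZMod 2) else 0) := by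
          push_cast
          rfl
  rw [Finset.sum_congr rfl (fun i _ => step2 i), Finset.sum_comm]
  apply Finset.sum_eq_zero
  intro w _
  rw [Finset.sum_comm]
  apply Finset.sum_eq_zero
  intro u _
  exact G3 hf hg hsame w u

end Aux

/-- If one o6c4c of a cubic graph is obtained from another by reorienting
some of the circuits (i.e. the two o6c4cs have the same underlying
unoriented cycles), then the numbers of ordered vertices of the two
solutions have the same parity. -/
theorem stmt9 {V : Type*} [Fintype V] (G : SimpleGraph V)
    (hcubic : ∀ v : V, (G.neighborSet v).ncard = 3)
    (f g : Fin 6 → V → V → ℤ)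
    (hf : IsO6c4c G f) (hg : IsO6c4c G g)
    (hsame : ∀ i u v, g i u v = f i u v ∨ g i u v = - f i u v) :
    Set.ncard {v : V | OrderedVertex f v} % 2
      = Set.ncard {v : V | OrderedVertex g v} % 2 := by
  classical
  letI : LinearOrder V := LinearOrder.lift' (Fintype.equivFin V) (Fintype.equivFin V).injective
  have hcount : ∀ (h' : Fin 6 → V → V → ℤ),
      ((Set.ncard {v : V | OrderedVertex h' v} : ZMod 2))
        = ∑ v : V, (if OrderedVertex h' v then (1:ZMod 2) else 0) := by
    intro h'
    rw [ncard_eq_filter_card]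
    rw [Finset.sum_boole]
  have key : ((Set.ncard {v : V | OrderedVertex f v} : ZMod 2))
      = ((Set.ncard {v : V | OrderedVertex g v} : ZMod 2)) := by
    rw [hcount f, hcount g]
    rw [Finset.sum_congr rfl (fun v _ => local_parity hf hcubic v),
      Finset.sum_congr rfl (fun v _ => local_parity hg hcubic v),
      Finset.sum_add_distrib, Finset.sum_add_distrib,
      global_parity hf hg hcubic hsame]
  exact (ZMod.natCast_eq_natCast_iff _ _ _).mp key
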